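/- Let I be a minimal left ideal of (C,*). Then for every idempotent u ∈ I (i.e. u*u = u), the set u*I := {u*p : p ∈ I} is equal to the singleton {u}. (In other words, every ideal subgroup of such a convex compact left-continuous affine semigroup is trivial.) -/

import Mathlib

/-- `I` is a left ideal of the semigroup `(C, mul)`: a nonempty subset of `C`
closed under left multiplication by elements of `C`. -/
def IsLeftIdeal {V : Type*} (C : Set V) (mul : V → V → V) (I : Set V) : Prop :=
  I.Nonempty ∧ I ⊆ C ∧ ∀ c ∈ C, ∀ i ∈ I, mul c i ∈ I

/-- `I` is a minimal left ideal of the semigroup `(C, mul)`. -/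
def IsMinimalLeftIdeal {V : Type*} (C : Set V) (mul : V → V → V) (I : Set V) : Prop :=
  IsLeftIdeal C mul I ∧ ∀ J : Set V, IsLeftIdeal C mul J → J ⊆ I → J = I

/-- In a compact convex left-continuous affine semigroup, every element `g` has
a "fixed point" `a ∈ C` with `a * g = a` (a Cesàro-average / ergodic argument). -/
theorem exists_right_fixed_point
    {V : Type*} [AddCommGroup V] [Module ℝ V] [TopologicalSpace V]
    [IsTopologicalAddGroup V] [ContinuousSMul ℝ V] [T2Space V]
    (C : Set V) (hCcomp : IsCompact C) (hCconv : Convex ℝ C)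
    (mul : V → V → V)
    (hclosed : ∀ p ∈ C, ∀ q ∈ C, mul p q ∈ C)
    (hcont : ∀ q ∈ C, ContinuousOn (fun p => mul p q) C)
    (haffl : ∀ q ∈ C, ∀ a ∈ C, ∀ b ∈ C, ∀ r : ℝ, 0 ≤ r → r ≤ 1 →
      mul (r • a + (1 - r) • b) q = r • mul a q + (1 - r) • mul b q)
    (g : V) (hg : g ∈ C) : ∃ a ∈ C, mul a g = a := by
  classical
  -- powers of g
  set P : ℕ → V := fun n => (fun x => mul x g)^[n] g with hP
  have hPsucc : ∀ n, P (n + 1) = mul (P n) g := by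
    intro n
    simp [hP, Function.iterate_succ_apply']
  have hPC : ∀ n, P n ∈ C := by
    intro n
    induction n with
    | zero => simpa [hP] using hg
    | succ n ih => rw [hPsucc]; exact hclosed _ ih _ hg
  -- Cesàro averages
  set A : ℕ → V := fun n => ((n : ℝ) + 1)⁻¹ • ∑ k ∈ Finset.range (n + 1), P k with hA
  have hAC : ∀ n, A n ∈ C := by
    intro n
    have h1 : ((n : ℝ) + 1) ≠ 0 := by positivity
    have : A n = ∑ k ∈ Finset.range (n + 1), ((n : ℝ) + 1)⁻¹ • P k := by
      simp only [hA]
      rw [Finset.smul_sum]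
    rw [this]
    refine hCconv.sum_mem (fun i _ => by positivity) ?_ (fun i _ => hPC i)
    rw [Finset.sum_const, Finset.card_range]
    field_simp
    rw [nsmul_eq_mul]; push_cast; exact mul_one_div_cancel h1
  -- key induction: A n * g is the average of P 1 .. P (n+1)
  have key : ∀ n, mul (A n) g = ((n : ℝ) + 1)⁻¹ • ∑ k ∈ Finset.range (n + 1), P (k + 1) := by
    intro n
    induction n with
    | zero =>
      have : A 0 = P 0 := by simp [hA]
      rw [this]
      simp [hPsucc 0]
    | succ n ih =>
      have h1 : ((n : ℝ) + 1) ≠ 0 := by positivity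
      have h2 : ((n : ℝ) + 2) ≠ 0 := by positivity
      set r : ℝ := ((n : ℝ) + 2)⁻¹ with hr
      have hr0 : (0 : ℝ) ≤ r := by positivity
      have hr1 : r ≤ 1 := by
        rw [hr]
        rw [inv_le_one_iff₀]
        right; linarith
      have hrc : (1 - r) * ((n : ℝ) + 1)⁻¹ = r := by
        rw [hr]
        field_simp
        ring
      have hsplit : ∀ Q : ℕ → V,
          ((n : ℝ) + 1 + 1)⁻¹ • ∑ k ∈ Finset.range (n + 1 + 1), Q k
            = r • Q (n + 1) + (1 - r) • (((n : ℝ) + 1)⁻¹ • ∑ k ∈ Finset.range (n + 1), Q k) := by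
        intro Q
        rw [Finset.sum_range_succ, smul_smul, hrc, smul_add]
        have : ((n : ℝ) + 1 + 1)⁻¹ = r := by rw [hr]; norm_num; ring_nf
        rw [this, add_comm]
      have hAn1 : A (n + 1) = r • P (n + 1) + (1 - r) • A n := by
        rw [hA]
        push_cast
        exact hsplit P
      rw [hAn1, haffl g hg (P (n + 1)) (hPC _) (A n) (hAC n) r hr0 hr1, ih, ← hPsucc]
      push_cast
      rw [hsplit (fun k => P (k + 1))]
  -- hence mul (A n) g = A n + small error
  have hAg : ∀ n, mul (A n) g = A n + ((n : ℝ) + 1)⁻¹ • (P (n + 1) - P 0) := by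
    intro n
    have hsum : ∑ k ∈ Finset.range (n + 1), P (k + 1)
        = (∑ k ∈ Finset.range (n + 1), P k) + (P (n + 1) - P 0) := by
      have h := Finset.sum_range_succ P (n + 1)
      have h' := Finset.sum_range_succ' P (n + 1)
      rw [h] at h'
      -- h' : ∑ range (n+1), P k + P (n+1) = ∑ range (n+1), P (·+1) + P 0
      have := h'.symm
      rw [← sub_eq_iff_eq_add] at this
      rw [← this]
      abel
    rw [key n, hsum, smul_add, hA]
  -- take an ultrafilter limit
  let U : Ultrafilter ℕ := Ultrafilter.of Filter.atTop
  have hUle : (U : Filter ℕ) ≤ Filter.atTop := Ultrafilter.of_le _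
  have hmemA : ((U.map A : Ultrafilter V) : Filter V) ≤ Filter.principal C := by
    simp only [Ultrafilter.coe_map]
    exact Filter.le_principal_iff.2 (Filter.mem_map.2 (Filter.univ_mem' hAC))
  obtain ⟨a, haC, haU⟩ := hCcomp.ultrafilter_le_nhds (U.map A) hmemA
  have hTA : Filter.Tendsto A U (nhds a) := haU
  have hmemP : ((U.map (fun n => P (n + 1)) : Ultrafilter V) : Filter V) ≤ Filter.principal C := by
    simp only [Ultrafilter.coe_map]
    exact Filter.le_principal_iff.2 (Filter.mem_map.2 (Filter.univ_mem' (fun n => hPC (n + 1))))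
  obtain ⟨c, hcC, hcU⟩ := hCcomp.ultrafilter_le_nhds (U.map (fun n => P (n + 1))) hmemP
  have hTP : Filter.Tendsto (fun n => P (n + 1)) U (nhds c) := hcU
  -- the error term tends to 0 along U
  have hinv : Filter.Tendsto (fun n : ℕ => ((n : ℝ) + 1)⁻¹) U (nhds 0) := by
    refine Filter.Tendsto.mono_left ?_ hUle
    simpa [one_div] using (tendsto_one_div_add_atTop_nhds_zero_nat : Filter.Tendsto (fun n : ℕ => 1 / ((n : ℝ) + 1)) Filter.atTop (nhds 0))
  have herr : Filter.Tendsto (fun n : ℕ => ((n : ℝ) + 1)⁻¹ • (P (n + 1) - P 0)) U (nhds 0) := by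
    have := hinv.smul (hTP.sub (tendsto_const_nhds (x := P 0)))
    simpa using this
  -- limit of mul (A n) g along U, two ways
  have hT1 : Filter.Tendsto (fun n => mul (A n) g) U (nhds (mul a g)) := by
    have hwithin : Filter.Tendsto A U (nhdsWithin a C) :=
      tendsto_nhdsWithin_iff.mpr ⟨hTA, Filter.Eventually.of_forall hAC⟩
    exact Filter.Tendsto.comp (hcont g hg a haC).tendsto hwithin
  have hT2 : Filter.Tendsto (fun n => mul (A n) g) U (nhds a) := by
    have := hTA.add herr
    rw [add_zero] at this
    refine this.congr fun n => (hAg n).symm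
  exact ⟨a, haC, tendsto_nhds_unique hT1 hT2⟩

/-- The ideal subgroup `u*I` of a minimal left ideal of a compact convex
left-continuous affine semigroup is trivial: `u*I = {u}`. -/
theorem ideal_subgroup_trivial
    {V : Type*} [AddCommGroup V] [Module ℝ V] [TopologicalSpace V]
    [IsTopologicalAddGroup V] [ContinuousSMul ℝ V] [T2Space V] [LocallyConvexSpace ℝ V]
    (C : Set V) (hCne : C.Nonempty) (hCcomp : IsCompact C) (hCconv : Convex ℝ C)
    (mul : V → V → V)
    (hclosed : ∀ p ∈ C, ∀ q ∈ C, mul p q ∈ C)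
    (hassoc : ∀ p ∈ C, ∀ q ∈ C, ∀ r ∈ C, mul (mul p q) r = mul p (mul q r))
    (hcont : ∀ q ∈ C, ContinuousOn (fun p => mul p q) C)
    (haffl : ∀ q ∈ C, ∀ a ∈ C, ∀ b ∈ C, ∀ r : ℝ, 0 ≤ r → r ≤ 1 →
      mul (r • a + (1 - r) • b) q = r • mul a q + (1 - r) • mul b q)
    (haffr : ∀ p ∈ C, ∀ a ∈ C, ∀ b ∈ C, ∀ r : ℝ, 0 ≤ r → r ≤ 1 →
      mul p (r • a + (1 - r) • b) = r • mul p a + (1 - r) • mul p b)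
    (I : Set V) (hI : IsMinimalLeftIdeal C mul I)
    (u : V) (hu : u ∈ I) (huid : mul u u = u) :
    (fun p => mul u p) '' I = {u} := by
  obtain ⟨⟨hIne, hIC, hIdeal⟩, hmin⟩ := hI
  have huC : u ∈ C := hIC hu
  ext g
  simp only [Set.mem_image, Set.mem_singleton_iff]
  constructor
  · rintro ⟨p, hpI, rfl⟩
    set g := mul u p with hgdef
    have hgI : g ∈ I := hIdeal u huC p hpI
    have hgC : g ∈ C := hIC hgI
    -- u * g = g
    have hug : mul u g = g := by
      rw [hgdef, ← hassoc u huC u huC p (hIC hpI), huid]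
    -- get a fixed point a ∈ C with a * g = a
    obtain ⟨a, haC, hag⟩ := exists_right_fixed_point C hCcomp hCconv mul hclosed hcont haffl g hgC
    -- a ∈ I
    have haI : a ∈ I := by rw [← hag]; exact hIdeal a haC g hgI
    -- C * a is a left ideal contained in I, hence equals I
    set J : Set V := (fun c => mul c a) '' C with hJ
    have hJideal : IsLeftIdeal C mul J := by
      refine ⟨⟨mul u a, u, huC, rfl⟩, ?_, ?_⟩
      · rintro _ ⟨c, hc, rfl⟩; exact hclosed c hc a haC
      · rintro c hc _ ⟨c', hc', rfl⟩
        exact ⟨mul c c', hclosed c hc c' hc', hassoc c hc c' hc' a haC⟩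
    have hJI : J ⊆ I := by
      rintro _ ⟨c, hc, rfl⟩; exact hIdeal c hc a haI
    have hJeq : J = I := hmin J hJideal hJI
    -- so u = b * a for some b ∈ C
    have huJ : u ∈ J := hJeq ▸ hu
    obtain ⟨b, hbC, hba0⟩ := huJ
    have hba : mul b a = u := hba0
    -- conclude: g = u * g = (b*a) * g = b * (a*g) = b * a = u
    calc g = mul u g := hug.symm
      _ = mul (mul b a) g := by rw [hba]
      _ = mul b (mul a g) := hassoc b hbC a haC g hgC
      _ = mul b a := by rw [hag]
      _ = u := hba
  · exact fun h => ⟨u, hu, h ▸ huid⟩
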